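/- Let b ∈ (1, √(3/2)), a ∈ (0, 1/3) with a·b³/(1−a·b) < δ and b²(1−3δ) < 1−2δ for some δ > 0 with δ ≤ 1/12. Then for every n ≥ 2: b²·(1−3δ) + δ + b^{n+1}·Σ_{j=0}^{n−2} b^{−j}·a^{n−j−1} ≤ 1. -/

import Mathlib

/-- for `n ≥ 2`,
`b²(1−3δ) + δ + b^{n+1}·Σ_{j=0}^{n−2} b^{−j}·a^{n−j−1} ≤ 1`. -/
theorem stmt13 (a b δ : ℝ) (ha : 0 < a) (ha' : a < 1/3)
    (hb : 1 < b) (hb' : b < Real.sqrt (3/2))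
    (hδ : 0 < δ) (hδ' : δ ≤ 1/12)
    (h3 : a * b ^ 3 / (1 - a * b) < δ)
    (h1 : b ^ 2 * (1 - 3 * δ) < 1 - 2 * δ) :
    ∀ n : ℕ, 2 ≤ n →
      b ^ 2 * (1 - 3 * δ) + δ +
        b ^ (n + 1 : ℕ) * ∑ j ∈ Finset.range (n - 1), b ^ (-(j : ℝ)) * a ^ (n - j - 1)
      ≤ 1 := by
  intro n hn
  obtain ⟨m, rfl⟩ : ∃ m, n = m + 2 := ⟨n - 2, by omega⟩
  have hb0 : (0:ℝ) < b := by linarith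
  have hb2 : b ^ 2 < 3/2 := by
    have := (Real.lt_sqrt hb0.le).mp hb'
    linarith
  have hab : a * b < 1 := by nlinarith
  have hab0 : 0 < a * b := by positivity
  have h1ab : (0:ℝ) < 1 - a * b := by linarith
  have key : b ^ (m + 2 + 1) *
      ∑ j ∈ Finset.range (m + 2 - 1), b ^ (-(j:ℝ)) * a ^ (m + 2 - j - 1)
      = ∑ j ∈ Finset.range (m+1), b^2 * (a*b)^(j+1) := by
    have hm1 : m + 2 - 1 = m + 1 := rfl
    rw [hm1, Finset.mul_sum,
      ← Finset.sum_range_reflect (fun j => b^2 * (a*b)^(j+1)) (m+1)]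
    apply Finset.sum_congr rfl
    intro j hj
    have hjm : j ≤ m := by
      have := Finset.mem_range.mp hj; omega
    have e1 : m + 2 - j - 1 = m + 1 - j := by omega
    have e2 : (m+1) - 1 - j = m - j := by omega
    have e3 : m - j + 1 = m + 1 - j := by omega
    rw [e1, e2, e3]
    have hrp : b ^ (-(j:ℝ)) = (b ^ j)⁻¹ := by
      rw [Real.rpow_neg hb0.le, Real.rpow_natCast]
    rw [hrp, mul_pow]
    have hsplit : b ^ (m + 2 + 1) = b ^ j * (b ^ 2 * b ^ (m + 1 - j)) := by
      rw [← pow_add, ← pow_add]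
      congr 1
      omega
    rw [hsplit]
    have hbj : (b ^ j) ≠ 0 := by positivity
    field_simp
  rw [key]
  have hsum : ∑ j ∈ Finset.range (m+1), (a*b)^j ≤ 1/(1 - a*b) := by
    rw [le_div_iff₀ h1ab]
    nlinarith [geom_sum_mul (a*b) (m+1), pow_nonneg hab0.le (m+1)]
  have hT : ∑ j ∈ Finset.range (m+1), b^2 * (a*b)^(j+1)
      = (b^2 * (a*b)) * ∑ j ∈ Finset.range (m+1), (a*b)^j := by
    rw [Finset.mul_sum]
    apply Finset.sum_congr rfl
    intro j _
    rw [pow_succ]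
    ring
  rw [hT]
  have hTle : (b^2 * (a*b)) * ∑ j ∈ Finset.range (m+1), (a*b)^j
      ≤ (b^2 * (a*b)) * (1/(1 - a*b)) := by
    apply mul_le_mul_of_nonneg_left hsum
    positivity
  have heq : (b^2 * (a*b)) * (1/(1 - a*b)) = a * b ^ 3 / (1 - a*b) := by
    field_simp
  rw [heq] at hTle
  linarith
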